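/- For every odd integer a ≥ 2, β_b(C(2a;1,a)) = α(C(2a;1,a)) = a. -/

import Mathlib

/-- The eccentricity of a vertex: maximum distance to any other vertex. -/
noncomputable def eccent {V : Type*} [Fintype V] (G : SimpleGraph V) (v : V) : ℕ :=
  Finset.univ.sup (fun u => G.dist v u)

/-- The diameter of a finite graph: maximum eccentricity. -/
noncomputable def graphDiam {V : Type*} [Fintype V] (G : SimpleGraph V) : ℕ :=
  Finset.univ.sup (fun v => eccent G v)

/-- `f` is an independent broadcast on `G`. -/
def IsIndepBroadcast {V : Type*} [Fintype V] (G : SimpleGraph V) (f : V → ℕ) : Prop :=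
  (∀ v, f v ≤ eccent G v) ∧
  ∀ u v : V, u ≠ v → 0 < f u → 0 < f v → max (f u) (f v) < G.dist u v

/-- The broadcast independence number: maximum cost of an independent broadcast. -/
noncomputable def betaB {V : Type*} [Fintype V] (G : SimpleGraph V) : ℕ :=
  sSup {k | ∃ f : V → ℕ, IsIndepBroadcast G f ∧ ∑ v, f v = k}

/-- The independence number: maximum size of an independent set. -/
noncomputable def alphaNum {V : Type*} [Fintype V] (G : SimpleGraph V) : ℕ :=
  sSup {k | ∃ s : Finset V, (∀ u ∈ s, ∀ v ∈ s, ¬ G.Adj u v) ∧ s.card = k}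

/-- The circulant graph `C(n;1,a)` on vertices `v_0,…,v_{n-1}` with edges
`v_i v_{i+1}` and `v_i v_{i+a}`, indices mod `n`. -/
def circulantGraph (n a : ℕ) : SimpleGraph (Fin n) :=
  SimpleGraph.fromRel (fun i j => (i.val + 1) % n = j.val ∨ (i.val + a) % n = j.val)


set_option linter.unusedSectionVars false
open Fin.NatCast Fin.CommRing

abbrev Gr (a : ℕ) : SimpleGraph (Fin (2 * a)) := circulantGraph (2 * a) a

section Lemmas

variable {a : ℕ} [NeZero (2 * a)] (ha : 3 ≤ a)

local notation "N" => 2 * a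

lemma modc {M x : ℕ} (h : x < 2*M) : x % M = x ∨ (M ≤ x ∧ x % M = x - M) := by
  rcases Nat.lt_or_ge x M with h'|h'
  · exact Or.inl (Nat.mod_eq_of_lt h')
  · right
    refine ⟨h', ?_⟩
    have : x % M = (x - M) % M := by
      conv_lhs => rw [← Nat.sub_add_cancel h']
      rw [Nat.add_mod_right]
    rw [this, Nat.mod_eq_of_lt (by omega)]

include ha

lemma val_one' : (((1:ℕ) : Fin N)).val = 1 := by
  rw [Fin.val_natCast]; exact Nat.mod_eq_of_lt (by omega)

lemma val_a' : (((a:ℕ) : Fin N)).val = a := by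
  rw [Fin.val_natCast]; exact Nat.mod_eq_of_lt (by omega)

lemma adj_succ (x : Fin N) : (Gr a).Adj x (x + ((1:ℕ) : Fin N)) := by
  have h1 := val_one' ha
  constructor
  · intro h
    have := congrArg Fin.val h
    rw [Fin.val_add, h1] at this
    have hx := x.isLt
    rcases modc (M := N) (x := x.val + 1) (by omega) with h'|h' <;> omega
  · left; left
    rw [Fin.val_add, h1]

lemma adj_diag (x : Fin N) : (Gr a).Adj x (x + ((a:ℕ) : Fin N)) := by
  have h1 := val_a' ha
  constructor
  · intro h
    have := congrArg Fin.val h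
    rw [Fin.val_add, h1] at this
    have hx := x.isLt
    rcases modc (M := N) (x := x.val + a) (by omega) with h'|h' <;> omega
  · left; right
    rw [Fin.val_add, h1]

lemma reach_add (x : Fin N) (m : ℕ) : (Gr a).Reachable x (x + (m : Fin N)) := by
  induction m with
  | zero => simpa using SimpleGraph.Reachable.refl (G := Gr a) x
  | succ k ih =>
      have he : ((k+1 : ℕ) : Fin N) = (k : Fin N) + ((1:ℕ) : Fin N) := by push_cast; ring
      rw [he, ← add_assoc]
      exact SimpleGraph.Reachable.trans (by simpa using ih) (adj_succ ha _).reachable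

lemma connected : (Gr a).Connected := by
  rw [SimpleGraph.connected_iff]
  refine ⟨fun x y => ?_, ⟨0⟩⟩
  have := reach_add ha x ((y - x).val)
  rwa [Fin.cast_val_eq_self, add_comm, sub_add_cancel] at this

lemma dist_add_le (x : Fin N) (m : ℕ) : (Gr a).dist x (x + (m : Fin N)) ≤ m := by
  induction m with
  | zero => simp
  | succ k ih =>
      have he : ((k+1 : ℕ) : Fin N) = (k : Fin N) + ((1:ℕ) : Fin N) := by push_cast; ring
      calc (Gr a).dist x (x + ((k+1:ℕ) : Fin N)) ≤
          (Gr a).dist x (x + (k : Fin N)) + (Gr a).dist (x + (k : Fin N)) (x + ((k+1:ℕ) : Fin N)) :=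
            (connected ha).dist_triangle
        _ ≤ k + 1 := by
            have hd : (Gr a).dist (x + (k : Fin N)) (x + ((k+1:ℕ) : Fin N)) = 1 := by
              rw [SimpleGraph.dist_eq_one_iff_adj, he, ← add_assoc]
              exact adj_succ ha _
            omega

lemma dist_le_min (x y : Fin N) :
    (Gr a).dist x y ≤ min ((y - x).val) (N - (y - x).val) := by
  have hcN : (y - x).val < N := (y - x).isLt
  have hy : x + (((y - x).val : ℕ) : Fin N) = y := by
    rw [Fin.cast_val_eq_self, add_comm, sub_add_cancel]
  have h1 : (Gr a).dist x y ≤ (y - x).val := by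
    conv_lhs => rw [← hy]
    exact dist_add_le ha x _
  have hx : y + ((N - (y - x).val : ℕ) : Fin N) = x := by
    have he : ((N - (y - x).val : ℕ) : Fin N) = - (((y - x).val : ℕ) : Fin N) := by
      rw [Nat.cast_sub (le_of_lt hcN)]
      simp
    rw [he, Fin.cast_val_eq_self]
    abel
  have h2 : (Gr a).dist x y ≤ N - (y - x).val := by
    rw [SimpleGraph.dist_comm]
    conv_lhs => rw [← hx]
    exact dist_add_le ha y _
  omega

lemma dist_le_alt (x y : Fin N) :
    (Gr a).dist x y ≤ a + 1 - min ((y - x).val) (N - (y - x).val) := by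
  have hcN : (y - x).val < N := (y - x).isLt
  have hstep : (Gr a).dist x (x + ((a:ℕ) : Fin N)) = 1 :=
    SimpleGraph.dist_eq_one_iff_adj.mpr (adj_diag ha x)
  have htri : (Gr a).dist x y ≤
      (Gr a).dist x (x + ((a:ℕ) : Fin N)) + (Gr a).dist (x + ((a:ℕ) : Fin N)) y :=
    (connected ha).dist_triangle
  have h2 := dist_le_min ha (x + ((a:ℕ) : Fin N)) y
  have hc'N : (y - (x + ((a:ℕ) : Fin N))).val < N := (y - (x + ((a:ℕ) : Fin N))).isLt
  have key : (y - (x + ((a:ℕ) : Fin N))).val = (N + (y - x).val - a) % N := by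
    have e1 : y - (x + ((a:ℕ) : Fin N)) = ((N + (y - x).val - a : ℕ) : Fin N) := by
      have e2 : ((N + (y - x).val - a : ℕ) : Fin N) =
          ((N:ℕ) : Fin N) + (((y - x).val : ℕ) : Fin N) - ((a:ℕ) : Fin N) := by
        rw [Nat.cast_sub (by omega), Nat.cast_add]
      rw [e2]
      have hN0 : ((N:ℕ) : Fin N) = 0 := by
        ext; rw [Fin.val_natCast, Nat.mod_self]; rfl
      rw [hN0, zero_add, Fin.cast_val_eq_self]
      abel
    rw [e1, Fin.val_natCast]
  have hcases := modc (M := N) (x := N + (y - x).val - a) (by omega)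
  rw [← key] at hcases
  omega


lemma eccent_le (v : Fin N) : eccent (Gr a) v ≤ (a+1)/2 := by
  refine Finset.sup_le fun u _ => ?_
  have h1 := dist_le_min ha v u
  have h2 := dist_le_alt ha v u
  have h3 : (u - v).val < N := (u - v).isLt
  omega

lemma eccent_pos (v : Fin N) : 1 ≤ eccent (Gr a) v := by
  have h1 : (Gr a).dist v (v + ((1:ℕ) : Fin N)) = 1 :=
    SimpleGraph.dist_eq_one_iff_adj.mpr (adj_succ ha v)
  calc (1:ℕ) = (Gr a).dist v (v + ((1:ℕ) : Fin N)) := h1.symm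
    _ ≤ eccent (Gr a) v := Finset.le_sup (Finset.mem_univ _)

omit ha in
lemma sub_rel (u v : Fin N) :
    u.val + (v - u).val = v.val ∨ u.val + (v - u).val = v.val + N := by
  have hy : u + (((v - u).val : ℕ) : Fin N) = v := by
    rw [Fin.cast_val_eq_self, add_comm, sub_add_cancel]
  have := congrArg Fin.val hy
  rw [Fin.val_add, Fin.val_natCast, Nat.mod_eq_of_lt (v - u).isLt] at this
  have h1 := u.isLt
  have h2 := (v - u).isLt
  have := modc (M := N) (x := u.val + (v - u).val) (by omega)
  omega

omit ha in
lemma sub_ne (u v : Fin N) (h : u ≠ v) : (v - u).val ≠ 0 := by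
  intro h0
  have hz : v - u = 0 := by
    ext
    simpa using h0
  exact h (sub_eq_zero.mp hz).symm

omit ha in
lemma add_val (v x : Fin N) (e : ℕ) (he : e < N) (h : v + (e : Fin N) = x) :
    x.val = v.val + e ∨ x.val + N = v.val + e := by
  have := congrArg Fin.val h
  rw [Fin.val_add, Fin.val_natCast, Nat.mod_eq_of_lt he] at this
  have h1 := v.isLt
  have h2 := x.isLt
  have := modc (M := N) (x := v.val + e) (by omega)
  omega

lemma sum_le (f : Fin N → ℕ) (hf : IsIndepBroadcast (Gr a) f) : ∑ v, f v ≤ a := by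
  classical
  have hfe : ∀ v, 2 * f v ≤ a + 1 := by
    intro v
    have h1 := (hf.1 v).trans (eccent_le ha v)
    omega
  set T : Fin N → Finset (Fin N) := fun v =>
    ((Finset.range (f v)).image fun i : ℕ => v + (i : Fin N)) ∪
    ((Finset.range (f v)).image fun i : ℕ => v + ((a:ℕ) : Fin N) + (i : Fin N)) with hT
  -- membership
  have hmem : ∀ v x, x ∈ T v → ∃ e : ℕ, (e < f v ∨ (a ≤ e ∧ e < a + f v)) ∧
      (x.val = v.val + e ∨ x.val + N = v.val + e) := by
    intro v x hx
    have hfv := hfe v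
    rw [hT] at hx
    simp only [Finset.mem_union, Finset.mem_image, Finset.mem_range] at hx
    rcases hx with ⟨i, hi, hix⟩ | ⟨i, hi, hix⟩
    · exact ⟨i, Or.inl hi, add_val v x i (by omega) hix⟩
    · refine ⟨a + i, Or.inr ⟨by omega, by omega⟩, add_val v x (a+i) (by omega) ?_⟩
      rw [← hix, Nat.cast_add]
      ring
  -- cards
  have hinj : ∀ v : Fin N, ∀ i ∈ Finset.range (f v), ∀ j ∈ Finset.range (f v),
      (i : Fin N) = (j : Fin N) → i = j := by
    intro v i hi j hj hij
    have hfv := hfe v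
    have := congrArg Fin.val hij
    rw [Fin.val_natCast, Fin.val_natCast] at this
    simp only [Finset.mem_range] at hi hj
    have e1 : i % N = i := Nat.mod_eq_of_lt (by omega)
    have e2 : j % N = j := Nat.mod_eq_of_lt (by omega)
    rw [e1, e2] at this
    exact this
  have hcard : ∀ v, (T v).card = 2 * f v := by
    intro v
    have hfv := hfe v
    rw [hT]
    rw [Finset.card_union_of_disjoint, Finset.card_image_of_injOn,
        Finset.card_image_of_injOn, Finset.card_range]
    · omega
    · intro i hi j hj hij
      exact hinj v i hi j hj (by exact add_right_injective _ hij)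
    · intro i hi j hj hij
      exact hinj v i hi j hj (by exact add_right_injective _ hij)
    · rw [Finset.disjoint_left]
      rintro x hx1 hx2
      simp only [Finset.mem_image, Finset.mem_range] at hx1 hx2
      obtain ⟨i, hi, hix⟩ := hx1
      obtain ⟨j, hj, hjx⟩ := hx2
      rw [← hjx] at hix
      have : (i : Fin N) = ((a:ℕ) : Fin N) + (j : Fin N) := by
        rwa [add_assoc, add_right_inj] at hix
      rw [← Nat.cast_add] at this
      have := congrArg Fin.val this
      rw [Fin.val_natCast, Fin.val_natCast] at this
      have e1 : i % N = i := Nat.mod_eq_of_lt (by omega)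
      have e2 : (a + j) % N = a + j := Nat.mod_eq_of_lt (by omega)
      rw [e1, e2] at this
      omega
  -- pairwise disjoint
  set s : Finset (Fin N) := Finset.univ.filter (fun v => 0 < f v) with hs
  have hdisj : ∀ u ∈ s, ∀ v ∈ s, u ≠ v → Disjoint (T u) (T v) := by
    intro u hu v hv huv
    rw [hs, Finset.mem_filter] at hu hv
    have hbd := hf.2 u v huv hu.2 hv.2
    have d1 := dist_le_min ha u v
    have d2 := dist_le_alt ha u v
    have hc := sub_rel u v
    have hc0 := sub_ne u v huv
    have hcN := (v - u).isLt
    rw [Finset.disjoint_left]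
    intro x hxu hxv
    obtain ⟨e₁, he₁, hx₁⟩ := hmem u x hxu
    obtain ⟨e₂, he₂, hx₂⟩ := hmem v x hxv
    have m1 := hfe u
    have m2 := hfe v
    have hM1 : f u ≤ max (f u) (f v) := le_max_left _ _
    have hM2 : f v ≤ max (f u) (f v) := le_max_right _ _
    omega
  -- sum
  have hsub : ∑ v, f v = ∑ v ∈ s, f v := by
    rw [hs]
    rw [Finset.sum_filter_of_ne]
    intro x _ hx
    omega
  have hcardsum : ∑ v ∈ s, (T v).card = (s.biUnion T).card := (Finset.card_biUnion hdisj).symm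
  have hle : (s.biUnion T).card ≤ N := by
    have := Finset.card_le_univ (s.biUnion T)
    simpa using this
  have : ∑ v ∈ s, 2 * f v ≤ N := by
    calc ∑ v ∈ s, 2 * f v = ∑ v ∈ s, (T v).card := by
          exact Finset.sum_congr rfl fun v _ => (hcard v).symm
      _ = (s.biUnion T).card := hcardsum
      _ ≤ N := hle
  rw [← Finset.mul_sum] at this
  rw [hsub]
  omega


omit ha in
lemma not_adj_even (hodd : Odd a) (u v : Fin N) (hu : u.val % 2 = 0) (hv : v.val % 2 = 0) :
    ¬ (Gr a).Adj u v := by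
  intro h
  have hao : a % 2 = 1 := Nat.odd_iff.mp hodd
  obtain ⟨hne, hrel⟩ := h
  have h1 := u.isLt
  have h2 := v.isLt
  have m1 := modc (M := N) (x := u.val + 1) (by omega)
  have m2 := modc (M := N) (x := u.val + a) (by omega)
  have m3 := modc (M := N) (x := v.val + 1) (by omega)
  have m4 := modc (M := N) (x := v.val + a) (by omega)
  rcases hrel with (h|h)|(h|h) <;> omega

-- the even independent set
lemma evens_card :
    (Finset.univ.filter (fun v : Fin N => v.val % 2 = 0)).card = a := by
  classical
  have himg : (Finset.univ.filter (fun v : Fin N => v.val % 2 = 0)) =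
      (Finset.univ : Finset (Fin a)).image (fun i => (⟨2 * i.val, by omega⟩ : Fin N)) := by
    ext x
    simp only [Finset.mem_filter, Finset.mem_univ, true_and, Finset.mem_image]
    constructor
    · intro hx
      have h1 := x.isLt
      exact ⟨⟨x.val / 2, by omega⟩, by ext; simp; omega⟩
    · rintro ⟨i, rfl⟩
      simp [Nat.mul_mod_right]
  rw [himg, Finset.card_image_of_injective _ (fun i j hij => by
    have := congrArg Fin.val hij
    simp at this
    exact Fin.ext this), Finset.card_univ, Fintype.card_fin]

lemma dist_ge_two (hodd : Odd a) (u v : Fin N) (hne : u ≠ v)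
    (hu : u.val % 2 = 0) (hv : v.val % 2 = 0) : 1 < (Gr a).dist u v := by
  have hr : (Gr a).Reachable u v := (connected ha).preconnected u v
  have h0 : 0 < (Gr a).dist u v := hr.pos_dist_of_ne hne
  have h1 : (Gr a).dist u v ≠ 1 := by
    intro h
    exact not_adj_even hodd u v hu hv (SimpleGraph.dist_eq_one_iff_adj.mp h)
  omega

lemma broadcast_lower (hodd : Odd a) :
    ∃ f : Fin N → ℕ, IsIndepBroadcast (Gr a) f ∧ ∑ v, f v = a := by
  classical
  refine ⟨fun v => if v.val % 2 = 0 then 1 else 0, ⟨⟨fun v => ?_, fun u v hne hu hv => ?_⟩, ?_⟩⟩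
  · by_cases h : v.val % 2 = 0
    · simpa [h] using eccent_pos ha v
    · simp [h]
  · have hu' : u.val % 2 = 0 := by by_contra h; simp [h] at hu
    have hv' : v.val % 2 = 0 := by by_contra h; simp [h] at hv
    have := dist_ge_two ha hodd u v hne hu' hv'
    simp only [hu', hv', if_pos]
    omega
  · simp only
    rw [← Finset.sum_filter]
    simp [evens_card ha]

lemma alpha_upper (s : Finset (Fin N)) (hs : ∀ u ∈ s, ∀ v ∈ s, ¬ (Gr a).Adj u v) :
    s.card ≤ a := by
  classical
  have := Finset.card_le_card_of_injOn (f := fun v : Fin N => (⟨v.val % a, Nat.mod_lt _ (by omega)⟩ : Fin a))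
    (s := s) (t := Finset.univ) (fun v _ => Finset.mem_univ _) ?_
  · simpa using this
  · intro u hu v hv huv
    have h : u.val % a = v.val % a := congrArg Fin.val huv
    have h1 := u.isLt
    have h2 := v.isLt
    have m1 := modc (M := a) (x := u.val) (by omega)
    have m2 := modc (M := a) (x := v.val) (by omega)
    have hcases : u.val = v.val ∨ v.val = u.val + a ∨ u.val = v.val + a := by omega
    rcases hcases with h'|h'|h'
    · exact Fin.ext h'
    · exfalso
      refine hs u hu v hv ⟨fun he => by rw [he] at h'; omega, Or.inl (Or.inr ?_)⟩
      rw [Nat.mod_eq_of_lt (by omega)]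
      omega
    · exfalso
      refine hs v hv u hu ⟨fun he => by rw [he] at h'; omega, Or.inl (Or.inr ?_)⟩
      rw [Nat.mod_eq_of_lt (by omega)]
      omega

theorem stmt3' (hodd : Odd a) :
    betaB (Gr a) = a ∧ alphaNum (Gr a) = a := by
  classical
  constructor
  · have hub : ∀ k ∈ {k | ∃ f : Fin N → ℕ, IsIndepBroadcast (Gr a) f ∧ ∑ v, f v = k}, k ≤ a := by
      rintro k ⟨f, hf, rfl⟩
      exact sum_le ha f hf
    have hmem : a ∈ {k | ∃ f : Fin N → ℕ, IsIndepBroadcast (Gr a) f ∧ ∑ v, f v = k} :=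
      broadcast_lower ha hodd
    exact le_antisymm (csSup_le ⟨a, hmem⟩ hub) (le_csSup ⟨a, hub⟩ hmem)
  · have hub : ∀ k ∈ {k | ∃ s : Finset (Fin N), (∀ u ∈ s, ∀ v ∈ s, ¬ (Gr a).Adj u v) ∧ s.card = k},
        k ≤ a := by
      rintro k ⟨s, hs, rfl⟩
      exact alpha_upper ha s hs
    have hmem : a ∈ {k | ∃ s : Finset (Fin N), (∀ u ∈ s, ∀ v ∈ s, ¬ (Gr a).Adj u v) ∧ s.card = k} :=
      ⟨Finset.univ.filter (fun v : Fin N => v.val % 2 = 0),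
        fun u hu v hv => not_adj_even hodd u v (Finset.mem_filter.mp hu).2 (Finset.mem_filter.mp hv).2,
        evens_card ha⟩
    exact le_antisymm (csSup_le ⟨a, hmem⟩ hub) (le_csSup ⟨a, hub⟩ hmem)

end Lemmas

theorem stmt3 (a : ℕ) (ha : 2 ≤ a) (hodd : Odd a) :
    betaB (circulantGraph (2 * a) a) = a ∧
    alphaNum (circulantGraph (2 * a) a) = a := by
  have ha3 : 3 ≤ a := by
    obtain ⟨k, rfl⟩ := hodd
    omega
  haveI : NeZero (2 * a) := ⟨by omega⟩
  exact stmt3' ha3 hodd
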